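/- Let d ≥ 2 be an integer, let 𝕊^d denote the unit sphere in ℝ^{d+1} with its surface measure σ, and let f : 𝕊^d → ℝ be continuous. For θ ∈ (0, π] and x ∈ 𝕊^d, let T_θ f(x) denote the average of f(cos θ · x + sin θ · u) over u ranging in the unit sphere of the orthogonal complement of x in ℝ^{d+1} (with respect to its surface measure). Let E := {(x, f(x)) : x ∈ 𝕊^d} ⊂ ℝ^{d+1} × ℝ be the graph of f, and let 𝒩(E, θ) denote the minimal number of metric balls of radius θ (in the Euclidean metric of ℝ^{d+2}) needed to cover E. Then there is a constant C > 0, depending only on d, such that ∫_{𝕊^d} |T_θ f(x) − f(x)| dσ(x) ≤ C θ^{d+1} 𝒩(E, θ) for all θ ∈ (0, π]. -/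

import Mathlib

open MeasureTheory Metric
open scoped ENNReal

/-- The minimal number of closed metric balls of radius `r` needed to cover `E`
(`⊤` if no finite cover exists). -/
noncomputable def coverNum {α : Type*} [PseudoMetricSpace α] (E : Set α) (r : ℝ) : ℕ∞ :=
  ⨅ (s : Finset α) (_ : E ⊆ ⋃ y ∈ s, Metric.closedBall y r), (s.card : ℕ∞)

/-- For `x` on the unit sphere of `ℝ^{d+1}` and `u` a unit vector of the orthogonal
complement of `x`, the point `cos θ • x + sin θ • u` of the unit sphere. -/
noncomputable def spherePt {d : ℕ} (θ : ℝ) (x : sphere (0 : EuclideanSpace ℝ (Fin (d + 1))) 1)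
    (u : sphere (0 : ((ℝ ∙ (x : EuclideanSpace ℝ (Fin (d + 1))))ᗮ :
        Submodule ℝ (EuclideanSpace ℝ (Fin (d + 1))))) 1) :
    sphere (0 : EuclideanSpace ℝ (Fin (d + 1))) 1 :=
  ⟨Real.cos θ • (x : EuclideanSpace ℝ (Fin (d + 1))) +
      Real.sin θ • ((u : ((ℝ ∙ (x : EuclideanSpace ℝ (Fin (d + 1))))ᗮ :
        Submodule ℝ (EuclideanSpace ℝ (Fin (d + 1))))) : EuclideanSpace ℝ (Fin (d + 1))), by
    have hx : ‖(x : EuclideanSpace ℝ (Fin (d + 1)))‖ = 1 := norm_eq_of_mem_sphere x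
    have hu' : ‖(u : ((ℝ ∙ (x : EuclideanSpace ℝ (Fin (d + 1))))ᗮ :
        Submodule ℝ (EuclideanSpace ℝ (Fin (d + 1)))))‖ = 1 := norm_eq_of_mem_sphere u
    have hu : ‖((u : ((ℝ ∙ (x : EuclideanSpace ℝ (Fin (d + 1))))ᗮ :
        Submodule ℝ (EuclideanSpace ℝ (Fin (d + 1))))) : EuclideanSpace ℝ (Fin (d + 1)))‖ = 1 := by
      exact hu'
    have horth : inner (𝕜 := ℝ) (x : EuclideanSpace ℝ (Fin (d + 1)))
        ((u : ((ℝ ∙ (x : EuclideanSpace ℝ (Fin (d + 1))))ᗮ :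
          Submodule ℝ (EuclideanSpace ℝ (Fin (d + 1))))) : EuclideanSpace ℝ (Fin (d + 1))) = 0 := by
      have := (u : ((ℝ ∙ (x : EuclideanSpace ℝ (Fin (d + 1))))ᗮ :
          Submodule ℝ (EuclideanSpace ℝ (Fin (d + 1))))).2
      exact (Submodule.mem_orthogonal _ _).1 this _ (Submodule.mem_span_singleton_self _)
    rw [mem_sphere_zero_iff_norm]
    have hsq : ‖Real.cos θ • (x : EuclideanSpace ℝ (Fin (d + 1))) +
        Real.sin θ • ((u : ((ℝ ∙ (x : EuclideanSpace ℝ (Fin (d + 1))))ᗮ :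
          Submodule ℝ (EuclideanSpace ℝ (Fin (d + 1))))) : EuclideanSpace ℝ (Fin (d + 1)))‖ ^ 2
        = 1 := by
      rw [norm_add_sq_real]
      rw [norm_smul, norm_smul, inner_smul_left, inner_smul_right, horth]
      simp only [hx, hu, Real.norm_eq_abs, mul_one, mul_zero, zero_mul]
      nlinarith [Real.sin_sq_add_cos_sq θ, abs_mul_abs_self (Real.cos θ),
        abs_mul_abs_self (Real.sin θ)]
    nlinarith [norm_nonneg (Real.cos θ • (x : EuclideanSpace ℝ (Fin (d + 1))) +
      Real.sin θ • ((u : ((ℝ ∙ (x : EuclideanSpace ℝ (Fin (d + 1))))ᗮ :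
        Submodule ℝ (EuclideanSpace ℝ (Fin (d + 1))))) : EuclideanSpace ℝ (Fin (d + 1)))), hsq]⟩

/-- The spherical average-shift operator: `Tshift θ f x` is the average of `f` over all
points of the sphere at geodesic distance `θ` from `x`, i.e. the average of
`f (cos θ • x + sin θ • u)` over `u` in the unit sphere of the orthogonal complement of `x`,
with respect to its surface measure. -/
noncomputable def Tshift {d : ℕ} (θ : ℝ)
    (f : sphere (0 : EuclideanSpace ℝ (Fin (d + 1))) 1 → ℝ)
    (x : sphere (0 : EuclideanSpace ℝ (Fin (d + 1))) 1) : ℝ :=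
  ⨍ u : sphere (0 : ((ℝ ∙ (x : EuclideanSpace ℝ (Fin (d + 1))))ᗮ :
      Submodule ℝ (EuclideanSpace ℝ (Fin (d + 1))))) 1,
    f (spherePt θ x u) ∂(Measure.toSphere volume)


section Aux
variable {d : ℕ}

local notation "E" => EuclideanSpace ℝ (Fin (d + 1))
local notation "S" => sphere (0 : EuclideanSpace ℝ (Fin (d + 1))) 1

lemma spherePt_zero (x : S) (u : sphere (0 : ((ℝ ∙ (x : E))ᗮ : Submodule ℝ E)) 1) :
    spherePt 0 x u = x := by
  ext
  simp [spherePt]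

lemma dist_spherePt (x : S) (u : sphere (0 : ((ℝ ∙ (x : E))ᗮ : Submodule ℝ E)) 1)
    {t : ℝ} (ht : 0 ≤ t) : dist ((spherePt t x u : S) : E) (x : E) ≤ t := by
  have hx : ‖(x : E)‖ = 1 := norm_eq_of_mem_sphere x
  have hu : ‖((u : ((ℝ ∙ (x : E))ᗮ : Submodule ℝ E)) : E)‖ = 1 := norm_eq_of_mem_sphere u
  have horth : inner (𝕜 := ℝ) (x : E) ((u : ((ℝ ∙ (x : E))ᗮ : Submodule ℝ E)) : E) = 0 :=
    (Submodule.mem_orthogonal _ _).1 (u : ((ℝ ∙ (x : E))ᗮ : Submodule ℝ E)).2 _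
      (Submodule.mem_span_singleton_self _)
  have hdiff : ((spherePt t x u : S) : E) - (x : E)
      = (Real.cos t - 1) • (x : E) + Real.sin t • ((u : ((ℝ ∙ (x : E))ᗮ : Submodule ℝ E)) : E) := by
    simp only [spherePt]
    rw [sub_smul, one_smul]
    abel
  rw [dist_eq_norm, hdiff]
  have hsq : ‖(Real.cos t - 1) • (x : E) + Real.sin t • ((u : ((ℝ ∙ (x : E))ᗮ :
      Submodule ℝ E)) : E)‖ ^ 2 ≤ t ^ 2 := by
    rw [norm_add_sq_real, norm_smul, norm_smul, inner_smul_left, inner_smul_right, horth]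
    simp only [hx, hu, Real.norm_eq_abs, mul_one, mul_zero, zero_mul]
    have hc := Real.one_sub_sq_div_two_le_cos (x := t)
    nlinarith [Real.sin_sq_add_cos_sq t, abs_mul_abs_self (Real.cos t - 1),
      abs_mul_abs_self (Real.sin t), Real.cos_le_one t]
  nlinarith [norm_nonneg ((Real.cos t - 1) • (x : E) + Real.sin t • ((u : ((ℝ ∙ (x : E))ᗮ :
      Submodule ℝ E)) : E))]

end Aux
section Chain
variable {d : ℕ}

local notation "E" => EuclideanSpace ℝ (Fin (d + 1))
local notation "S" => sphere (0 : EuclideanSpace ℝ (Fin (d + 1))) 1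
local notation "P" => WithLp 2 (EuclideanSpace ℝ (Fin (d + 1)) × ℝ)

lemma lipschitz_fst : LipschitzWith 1 (fun p : P => (WithLp.equiv 2 ((EuclideanSpace ℝ (Fin (d + 1))) × ℝ) p).1) := by
  have := (LipschitzWith.prod_fst (α := EuclideanSpace ℝ (Fin (d+1))) (β := ℝ)).comp
    (WithLp.prod_lipschitzWith_ofLp 2 (EuclideanSpace ℝ (Fin (d+1))) ℝ)
  rw [mul_one] at this
  exact this

lemma lipschitz_snd : LipschitzWith 1 (fun p : P => (WithLp.equiv 2 ((EuclideanSpace ℝ (Fin (d + 1))) × ℝ) p).2) := by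
  have := (LipschitzWith.prod_snd (α := EuclideanSpace ℝ (Fin (d+1))) (β := ℝ)).comp
    (WithLp.prod_lipschitzWith_ofLp 2 (EuclideanSpace ℝ (Fin (d+1))) ℝ)
  rw [mul_one] at this
  exact this

lemma chain_bound (f : S → ℝ) (hf : Continuous f) {θ : ℝ} (hθ : 0 < θ)
    (s : Finset P)
    (hs : {p : P | ∃ x : S, p = (WithLp.equiv 2 ((EuclideanSpace ℝ (Fin (d + 1))) × ℝ)).symm
        ((x : E), f x)} ⊆ ⋃ y ∈ s, Metric.closedBall y θ)
    (x y : S) (γ : ℝ → S) (hγ : Continuous γ) (hγ0 : γ 0 = x) (hγθ : γ θ = y)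
    (hclose : ∀ t ∈ Set.Icc (0:ℝ) θ, dist ((γ t : S) : E) (x : E) ≤ θ) :
    |f y - f x| ≤ 2 * θ *
      (s.filter (fun c => dist (x : E)
        ((WithLp.equiv 2 ((EuclideanSpace ℝ (Fin (d + 1))) × ℝ) c).1) ≤ 2 * θ)).card := by
  classical
  set Q : P → Prop := fun c => dist (x : E)
      ((WithLp.equiv 2 ((EuclideanSpace ℝ (Fin (d + 1))) × ℝ) c).1) ≤ 2 * θ with hQ
  -- the path in the graph
  set F : ℝ → P := fun t =>
    (WithLp.equiv 2 ((EuclideanSpace ℝ (Fin (d + 1))) × ℝ)).symm ((γ t : E), f (γ t)) with hF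
  have hFcont : Continuous F := by
    have hsymm :=
      (WithLp.prod_antilipschitzWith_ofLp 2 (EuclideanSpace ℝ (Fin (d+1))) ℝ).to_rightInverse
        (WithLp.equiv 2 ((EuclideanSpace ℝ (Fin (d + 1))) × ℝ)).right_inv
    exact hsymm.continuous.comp
      (((continuous_subtype_val.comp hγ).prodMk (hf.comp hγ)) : _)
  set K : Set P := F '' Set.Icc 0 θ with hK
  have hKgraph : K ⊆ {p : P | ∃ x : S, p =
      (WithLp.equiv 2 ((EuclideanSpace ℝ (Fin (d + 1))) × ℝ)).symm ((x : E), f x)} := by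
    rintro p ⟨t, -, rfl⟩
    exact ⟨γ t, rfl⟩
  have hKcover : K ⊆ ⋃ y ∈ s, Metric.closedBall y θ := hKgraph.trans hs
  -- the image of f along the path
  set J : Set ℝ := (fun p : P => (WithLp.equiv 2 ((EuclideanSpace ℝ (Fin (d + 1))) × ℝ) p).2) '' K
    with hJ
  have hJeq : J = (fun t => f (γ t)) '' Set.Icc 0 θ := by
    rw [hJ, hK, Set.image_image]
    rfl
  have hfx : f x ∈ J := by rw [hJeq]; exact ⟨0, Set.left_mem_Icc.2 hθ.le, by show f (γ 0) = f x; rw [hγ0]⟩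
  have hfy : f y ∈ J := by rw [hJeq]; exact ⟨θ, Set.right_mem_Icc.2 hθ.le, by show f (γ θ) = f y; rw [hγθ]⟩
  have hJconn : IsPreconnected J := by
    rw [hJeq]
    exact (isPreconnected_Icc.image _ ((hf.comp hγ).continuousOn))
  have hsub : Set.uIcc (f x) (f y) ⊆ J := by
    rw [Set.uIcc]
    exact hJconn.Icc_subset (by rcases le_total (f x) (f y) with h | h <;> simp [h, hfx, hfy])
      (by rcases le_total (f x) (f y) with h | h <;> simp [h, hfx, hfy])
  -- the relevant finite set of balls
  set s' : Finset P := s.filter (fun c => (Metric.closedBall c θ ∩ K).Nonempty) with hs'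
  have hJcover : J ⊆ ⋃ c ∈ s', (fun p : P =>
      (WithLp.equiv 2 ((EuclideanSpace ℝ (Fin (d + 1))) × ℝ) p).2) '' (Metric.closedBall c θ ∩ K) := by
    rintro j ⟨p, hpK, rfl⟩
    obtain ⟨c, hcs, hpc⟩ := Set.mem_iUnion₂.1 (hKcover hpK)
    refine Set.mem_iUnion₂.2 ⟨c, ?_, ⟨p, ⟨hpc, hpK⟩, rfl⟩⟩
    exact Finset.mem_filter.2 ⟨hcs, ⟨p, hpc, hpK⟩⟩
  -- volume estimate
  have hdiamball : ∀ c : P, EMetric.diam (Metric.closedBall c θ) ≤ ENNReal.ofReal (2 * θ) := by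
    intro c
    refine EMetric.diam_le fun p hp q hq => ?_
    rw [edist_dist]
    refine ENNReal.ofReal_le_ofReal ?_
    calc dist p q ≤ dist p c + dist c q := dist_triangle _ _ _
    _ ≤ θ + θ := add_le_add (Metric.mem_closedBall.1 hp)
        (by rw [dist_comm]; exact Metric.mem_closedBall.1 hq)
    _ = 2 * θ := by ring
  have hvol : ENNReal.ofReal |f y - f x| ≤ (s'.card : ℝ≥0∞) * ENNReal.ofReal (2 * θ) := by
    have h1 : ENNReal.ofReal |f y - f x| = volume (Set.uIcc (f x) (f y)) := by
      rw [Set.uIcc, Real.volume_Icc, max_sub_min_eq_abs, abs_sub_comm]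
    calc ENNReal.ofReal |f y - f x| = volume (Set.uIcc (f x) (f y)) := h1
    _ ≤ volume J := measure_mono hsub
    _ ≤ volume (⋃ c ∈ s', (fun p : P =>
        (WithLp.equiv 2 ((EuclideanSpace ℝ (Fin (d + 1))) × ℝ) p).2) ''
          (Metric.closedBall c θ ∩ K)) := measure_mono hJcover
    _ ≤ ∑ c ∈ s', volume ((fun p : P =>
        (WithLp.equiv 2 ((EuclideanSpace ℝ (Fin (d + 1))) × ℝ) p).2) ''
          (Metric.closedBall c θ ∩ K)) := measure_biUnion_finset_le _ _
    _ ≤ ∑ _c ∈ s', ENNReal.ofReal (2 * θ) := by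
        refine Finset.sum_le_sum fun c _ => ?_
        calc volume ((fun p : P =>
            (WithLp.equiv 2 ((EuclideanSpace ℝ (Fin (d + 1))) × ℝ) p).2) ''
              (Metric.closedBall c θ ∩ K))
            ≤ EMetric.diam ((fun p : P =>
              (WithLp.equiv 2 ((EuclideanSpace ℝ (Fin (d + 1))) × ℝ) p).2) ''
                (Metric.closedBall c θ ∩ K)) := Real.volume_le_diam _
        _ ≤ 1 * EMetric.diam (Metric.closedBall c θ ∩ K) := lipschitz_snd.ediam_image_le _
        _ = EMetric.diam (Metric.closedBall c θ ∩ K) := one_mul _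
        _ ≤ EMetric.diam (Metric.closedBall c θ) := EMetric.diam_mono Set.inter_subset_left
        _ ≤ ENNReal.ofReal (2 * θ) := hdiamball c
    _ = (s'.card : ℝ≥0∞) * ENNReal.ofReal (2 * θ) := by
        rw [Finset.sum_const, nsmul_eq_mul]
  have hcard : s'.card ≤ (s.filter Q).card := by
    refine Finset.card_le_card (Finset.monotone_filter_right s ?_)
    intro c _ hc
    obtain ⟨p, hpc, hpK⟩ := hc
    obtain ⟨t, ht, rfl⟩ := hpK
    have h1 : dist ((γ t : S) : E)
        ((WithLp.equiv 2 ((EuclideanSpace ℝ (Fin (d + 1))) × ℝ) c).1) ≤ θ := by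
      have := lipschitz_fst (d := d).dist_le_mul (F t) c
      norm_num [hF] at this
      exact this.trans (Metric.mem_closedBall.1 hpc)
    show Q c
    calc dist (x : E) ((WithLp.equiv 2 ((EuclideanSpace ℝ (Fin (d + 1))) × ℝ) c).1)
        ≤ dist (x : E) ((γ t : S) : E) +
          dist ((γ t : S) : E) ((WithLp.equiv 2 ((EuclideanSpace ℝ (Fin (d + 1))) × ℝ) c).1) :=
        dist_triangle _ _ _
    _ ≤ θ + θ := add_le_add (by rw [dist_comm]; exact hclose t ht) h1
    _ = 2 * θ := by ring
  have hfin : ENNReal.ofReal |f y - f x| ≤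
      ENNReal.ofReal (((s.filter Q).card : ℝ) * (2 * θ)) := by
    refine hvol.trans ?_
    calc (s'.card : ℝ≥0∞) * ENNReal.ofReal (2 * θ)
        ≤ ((s.filter Q).card : ℝ≥0∞) * ENNReal.ofReal (2 * θ) :=
          mul_le_mul_left (Nat.cast_le.2 hcard) _
    _ = ENNReal.ofReal ((s.filter Q).card : ℝ) * ENNReal.ofReal (2 * θ) := by
          rw [ENNReal.ofReal_natCast]
    _ = ENNReal.ofReal (((s.filter Q).card : ℝ) * (2 * θ)) :=
          (ENNReal.ofReal_mul (by positivity)).symm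
  have := (ENNReal.ofReal_le_ofReal_iff (by positivity)).1 hfin
  linarith

end Chain
section PW
variable {d : ℕ}

local notation "E" => EuclideanSpace ℝ (Fin (d + 1))
local notation "S" => sphere (0 : EuclideanSpace ℝ (Fin (d + 1))) 1
local notation "P" => WithLp 2 (EuclideanSpace ℝ (Fin (d + 1)) × ℝ)

lemma pointwise_bound (hd : 2 ≤ d) (f : S → ℝ) (hf : Continuous f) {θ : ℝ} (hθ : 0 < θ)
    (s : Finset P)
    (hs : {p : P | ∃ x : S, p = (WithLp.equiv 2 ((EuclideanSpace ℝ (Fin (d + 1))) × ℝ)).symm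
        ((x : E), f x)} ⊆ ⋃ y ∈ s, Metric.closedBall y θ)
    (x : S) :
    |Tshift θ f x - f x| ≤ 2 * θ *
      (s.filter (fun c => dist (x : E)
        ((WithLp.equiv 2 ((EuclideanSpace ℝ (Fin (d + 1))) × ℝ) c).1) ≤ 2 * θ)).card := by
  classical
  set W : Submodule ℝ (EuclideanSpace ℝ (Fin (d + 1))) := (ℝ ∙ (x : E))ᗮ with hW
  set ν : Measure (sphere (0 : W) 1) := Measure.toSphere (volume : Measure W) with hν
  set M : ℝ := 2 * θ *
      (s.filter (fun c => dist (x : E)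
        ((WithLp.equiv 2 ((EuclideanSpace ℝ (Fin (d + 1))) × ℝ) c).1) ≤ 2 * θ)).card with hM
  have hM0 : 0 ≤ M := by positivity
  -- the chain bound, for every u
  have hMb : ∀ u : sphere (0 : W) 1, |f (spherePt θ x u) - f x| ≤ M := by
    intro u
    have hγcont : Continuous (fun t => spherePt (d := d) t x u) := by
      refine Continuous.subtype_mk ?_ _
      exact (Real.continuous_cos.smul continuous_const).add
        (Real.continuous_sin.smul continuous_const)
    refine chain_bound f hf hθ s hs x (spherePt θ x u) (fun t => spherePt t x u)
      hγcont (spherePt_zero x u) rfl ?_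
    intro t ht
    exact (dist_spherePt x u ht.1).trans ht.2
  -- continuity of the integrand
  have hucont : Continuous (fun u : sphere (0 : W) 1 => f (spherePt θ x u)) := by
    refine hf.comp (Continuous.subtype_mk ?_ _)
    exact continuous_const.add ((show Continuous fun u : sphere (0 : W) 1 => ((u : W) : E) from
        continuous_subtype_val.comp continuous_subtype_val).const_smul (Real.sin θ))
  -- the measure is finite and nonzero
  have hνtop : ν Set.univ ≠ ⊤ := measure_ne_top _ _
  have hdim : Module.finrank ℝ W = d := by
    have h1 : Module.finrank ℝ (ℝ ∙ (x : E)) + Module.finrank ℝ W = d + 1 := by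
      rw [hW]
      rw [Submodule.finrank_add_finrank_orthogonal]
      exact finrank_euclideanSpace_fin
    rw [finrank_span_singleton (ne_zero_of_mem_unit_sphere x)] at h1
    omega
  have hνzero : ν Set.univ ≠ 0 := by
    rw [hν, Measure.toSphere_apply_univ, hdim]
    refine mul_ne_zero (by simp; omega) ?_
    exact (measure_ball_pos volume 0 one_pos).ne'
  set a : ℝ := (ν Set.univ).toReal with ha
  have ha0 : 0 < a := ENNReal.toReal_pos hνzero hνtop
  -- integrability
  have hint : Integrable (fun u : sphere (0 : W) 1 => f (spherePt θ x u)) ν := by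
    refine ⟨hucont.aestronglyMeasurable, ?_⟩
    refine MeasureTheory.HasFiniteIntegral.of_bounded (C := M + |f x|) (ae_of_all _ fun u => ?_)
    have := hMb u
    rw [Real.norm_eq_abs]
    calc |f (spherePt θ x u)| = |(f (spherePt θ x u) - f x) + f x| := by ring_nf
    _ ≤ |f (spherePt θ x u) - f x| + |f x| := abs_add_le _ _
    _ ≤ M + |f x| := add_le_add this le_rfl
  set I : ℝ := ∫ u, f (spherePt θ x u) ∂ν with hI
  have hsub : ∫ u, (f (spherePt θ x u) - f x) ∂ν = I - a * f x := by
    rw [integral_sub hint (integrable_const _), integral_const, smul_eq_mul]; rfl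
  have key : |I - a * f x| ≤ M * a := by
    rw [← hsub, ← Real.norm_eq_abs]
    exact norm_integral_le_of_norm_le_const (ae_of_all _ fun u => by
      rw [Real.norm_eq_abs]; exact hMb u)
  have hT : Tshift θ f x = a⁻¹ * I := by
    rw [Tshift, average_eq, smul_eq_mul]; rfl
  rw [hT]
  have heq : a⁻¹ * I - f x = a⁻¹ * (I - a * f x) := by
    field_simp
  rw [heq, abs_mul, abs_of_pos (inv_pos.2 ha0)]
  calc a⁻¹ * |I - a * f x| ≤ a⁻¹ * (M * a) := by
        exact mul_le_mul_of_nonneg_left key (inv_pos.2 ha0).le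
  _ = M := by field_simp
end PW
section Cap
open scoped Pointwise
variable {d : ℕ}

local notation "E" => EuclideanSpace ℝ (Fin (d + 1))
local notation "S" => sphere (0 : EuclideanSpace ℝ (Fin (d + 1))) 1

/-- constant in the cap bound -/
noncomputable def capC (d : ℕ) : ℝ :=
  (d + 1) * (4 ^ (d + 1) * 33) * (volume (Metric.ball (0 : EuclideanSpace ℝ (Fin (d + 1))) 1)).toReal

lemma capC_nonneg (d : ℕ) : 0 ≤ capC d := by
  rw [capC]
  positivity

lemma cap_bound (p : E) {R : ℝ} (hR : 0 < R) (hR' : R ≤ 8 * Real.pi) :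
    Measure.toSphere (volume : Measure (EuclideanSpace ℝ (Fin (d + 1))))
      {x : S | dist (x : E) p ≤ R} ≤ ENNReal.ofReal (capC d * R ^ d) := by
  classical
  set σd : Measure S := Measure.toSphere (volume : Measure (EuclideanSpace ℝ (Fin (d + 1))))
    with hσd
  rcases Set.eq_empty_or_nonempty {x : S | dist (x : E) p ≤ R} with hA | ⟨x0, hx0⟩
  · rw [hA]
    simp
  set R' : ℝ := 2 * R with hR'def
  have hR'0 : 0 < R' := by positivity
  set A' : Set S := {x : S | dist (x : E) (x0 : E) ≤ R'} with hA'
  have hsub : {x : S | dist (x : E) p ≤ R} ⊆ A' := by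
    intro z hz
    calc dist (z : E) (x0 : E) ≤ dist (z : E) p + dist p (x0 : E) := dist_triangle _ _ _
    _ ≤ R + R := add_le_add hz (by rw [dist_comm]; exact hx0)
    _ = R' := by rw [hR'def]; ring
  have hA'meas : MeasurableSet A' := by
    refine IsClosed.measurableSet ?_
    exact isClosed_le (continuous_subtype_val.dist continuous_const) continuous_const
  set m : ℕ := ⌊1 / R'⌋₊ with hm
  set V : ℝ≥0∞ := volume (Metric.ball (0 : E) 1) with hV
  have hVtop : V ≠ ⊤ := (measure_ball_lt_top).ne
  have hcover : Set.Ioo (0:ℝ) 1 • ((↑) '' A' : Set E) ⊆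
      ⋃ k ∈ Finset.range (m + 1), Metric.closedBall (((k : ℝ) * R') • (x0 : E)) (2 * R') := by
    rintro z hz
    obtain ⟨t, ht, w, hw, rfl⟩ := Set.mem_smul.1 hz
    obtain ⟨y, hy, rfl⟩ := hw
    set k : ℕ := ⌊t / R'⌋₊ with hk
    have hkm : k ≤ m := Nat.floor_le_floor (by gcongr; exact ht.2.le)
    have hk1 : (k : ℝ) * R' ≤ t := by
      have := Nat.floor_le (a := t / R') (div_nonneg ht.1.le hR'0.le)
      calc (k : ℝ) * R' ≤ (t / R') * R' := by
            exact mul_le_mul_of_nonneg_right this hR'0.le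
      _ = t := by field_simp
    have hk2 : t - (k : ℝ) * R' ≤ R' := by
      have := (Nat.lt_floor_add_one (t / R')).le
      have h2 : t ≤ ((k : ℝ) + 1) * R' := by
        calc t = (t / R') * R' := by field_simp
        _ ≤ ((k : ℝ) + 1) * R' := mul_le_mul_of_nonneg_right this hR'0.le
      nlinarith
    refine Set.mem_iUnion₂.2 ⟨k, Finset.mem_range.2 (by omega), ?_⟩
    rw [Metric.mem_closedBall]
    have hx0n : ‖(x0 : E)‖ = 1 := norm_eq_of_mem_sphere x0
    calc dist (t • (y : E)) (((k : ℝ) * R') • (x0 : E))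
        ≤ dist (t • (y : E)) (t • (x0 : E)) +
          dist (t • (x0 : E)) (((k : ℝ) * R') • (x0 : E)) := dist_triangle _ _ _
    _ ≤ R' + R' := by
        refine add_le_add ?_ ?_
        · rw [dist_smul₀]
          calc |t| * dist (y : E) (x0 : E) ≤ 1 * R' := by
                refine mul_le_mul ?_ hy ?_ ?_
                · rw [abs_of_pos ht.1]; exact ht.2.le
                · exact dist_nonneg
                · norm_num
          _ = R' := one_mul _
        · rw [dist_eq_norm, ← sub_smul, norm_smul, hx0n, mul_one, Real.norm_eq_abs,
            abs_of_nonneg (by linarith)]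
          linarith
    _ = 2 * R' := by ring
  have hfr : Module.finrank ℝ (EuclideanSpace ℝ (Fin (d + 1))) = d + 1 :=
    finrank_euclideanSpace_fin
  have hvolcover : volume (Set.Ioo (0:ℝ) 1 • ((↑) '' A' : Set E)) ≤
      ((m : ℝ≥0∞) + 1) * (ENNReal.ofReal ((2 * R') ^ (d + 1)) * V) := by
    refine (measure_mono hcover).trans ?_
    refine (measure_biUnion_finset_le _ _).trans (le_of_eq ?_)
    have hball : ∀ k : ℕ, volume (Metric.closedBall (((k : ℝ) * R') • (x0 : E)) (2 * R')) =
        ENNReal.ofReal ((2 * R') ^ (d + 1)) * V := by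
      intro k
      rw [Measure.addHaar_closedBall _ _ (by positivity), hfr]
    calc ∑ k ∈ Finset.range (m + 1),
        volume (Metric.closedBall (((k : ℝ) * R') • (x0 : E)) (2 * R'))
        = ∑ _k ∈ Finset.range (m + 1), ENNReal.ofReal ((2 * R') ^ (d + 1)) * V := by
          exact Finset.sum_congr rfl fun k _ => hball k
    _ = ((m : ℝ≥0∞) + 1) * (ENNReal.ofReal ((2 * R') ^ (d + 1)) * V) := by
          rw [Finset.sum_const, Finset.card_range, nsmul_eq_mul]
          push_cast
          ring
  -- numeric bound
  have hnum : ((m : ℝ≥0∞) + 1) * ENNReal.ofReal ((2 * R') ^ (d + 1)) ≤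
      ENNReal.ofReal (4 ^ (d + 1) * 33 * R ^ d) := by
    have h1 : ((m : ℝ≥0∞) + 1) = ENNReal.ofReal ((m : ℝ) + 1) := by
      rw [ENNReal.ofReal_add (by positivity) (by norm_num), ENNReal.ofReal_natCast,
        ENNReal.ofReal_one]
    rw [h1, ← ENNReal.ofReal_mul (by positivity)]
    refine ENNReal.ofReal_le_ofReal ?_
    have hm1 : (m : ℝ) ≤ 1 / R' := Nat.floor_le (by positivity)
    have hpi : Real.pi ≤ 4 := by
      nlinarith [Real.pi_le_four]
    have h4 : (0:ℝ) < 4 ^ (d + 1) := by positivity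
    have hRd : (0:ℝ) < R ^ d := by positivity
    calc ((m : ℝ) + 1) * (2 * R') ^ (d + 1) ≤ (1 / R' + 1) * (2 * R') ^ (d + 1) := by
          refine mul_le_mul_of_nonneg_right (by linarith) (by positivity)
    _ = (1 / (2 * R) + 1) * (4 ^ (d + 1) * R ^ (d + 1)) := by
          rw [hR'def]
          rw [show (2 * (2 * R)) ^ (d + 1) = 4 ^ (d+1) * R ^ (d+1) by
            rw [← mul_pow]; ring_nf]
    _ = 4 ^ (d + 1) * (R ^ d / 2 + R ^ (d + 1)) := by
          field_simp
          ring
    _ ≤ 4 ^ (d + 1) * (R ^ d / 2 + 32 * R ^ d) := by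
          have hRd1 : R ^ (d + 1) = R ^ d * R := by ring
          have h8 : R ≤ 32 := by nlinarith
          refine mul_le_mul_of_nonneg_left ?_ (by positivity)
          nlinarith
    _ ≤ 4 ^ (d + 1) * 33 * R ^ d := by nlinarith
  -- put everything together
  calc σd {x : S | dist (x : E) p ≤ R} ≤ σd A' := measure_mono hsub
  _ = ((d + 1 : ℕ) : ℝ≥0∞) * volume (Set.Ioo (0:ℝ) 1 • ((↑) '' A' : Set E)) := by
        rw [hσd, Measure.toSphere_apply' _ hA'meas, hfr]
  _ ≤ ((d + 1 : ℕ) : ℝ≥0∞) * (((m : ℝ≥0∞) + 1) * (ENNReal.ofReal ((2 * R') ^ (d + 1)) * V)) :=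
        mul_le_mul_right hvolcover _
  _ = ((m : ℝ≥0∞) + 1) * ENNReal.ofReal ((2 * R') ^ (d + 1)) * (((d + 1 : ℕ) : ℝ≥0∞) * V) := by
        ring
  _ ≤ ENNReal.ofReal (4 ^ (d + 1) * 33 * R ^ d) * (((d + 1 : ℕ) : ℝ≥0∞) * V) :=
        mul_le_mul_left hnum _
  _ = ENNReal.ofReal (capC d * R ^ d) := by
        rw [capC, ← ENNReal.ofReal_toReal (a := V) hVtop, ← ENNReal.ofReal_natCast (d+1),
          ← ENNReal.ofReal_mul (by positivity), ← ENNReal.ofReal_mul (by positivity)]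
        refine congrArg _ ?_
        push_cast
        ring
end Cap
theorem stmt_12 (d : ℕ) (hd : 2 ≤ d) :
    ∃ C : ℝ, 0 < C ∧
      ∀ f : sphere (0 : EuclideanSpace ℝ (Fin (d + 1))) 1 → ℝ, Continuous f →
        ∀ θ : ℝ, 0 < θ → θ ≤ Real.pi →
          ENNReal.ofReal (∫ x, |Tshift θ f x - f x|
              ∂(Measure.toSphere (volume : Measure (EuclideanSpace ℝ (Fin (d + 1))))))
            ≤ ENNReal.ofReal (C * θ ^ (d + 1)) *
              (coverNum
                {p : WithLp 2 (EuclideanSpace ℝ (Fin (d + 1)) × ℝ) |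
                  ∃ x : sphere (0 : EuclideanSpace ℝ (Fin (d + 1))) 1,
                    p = (WithLp.equiv 2 (EuclideanSpace ℝ (Fin (d + 1)) × ℝ)).symm
                      ((x : EuclideanSpace ℝ (Fin (d + 1))), f x)} θ : ℝ≥0∞) := by
  classical
  set E' := EuclideanSpace ℝ (Fin (d + 1)) with hE'
  refine ⟨2 ^ (d + 1) * capC d + 1, by have := capC_nonneg d; positivity, ?_⟩
  set C : ℝ := 2 ^ (d + 1) * capC d + 1 with hC
  intro f hf θ hθ hθπ
  have hCθ0 : ENNReal.ofReal (C * θ ^ (d + 1)) ≠ 0 := by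
    rw [Ne, ENNReal.ofReal_eq_zero, not_le]
    have hcap0 := capC_nonneg d
    positivity
  set Eset : Set (WithLp 2 (EuclideanSpace ℝ (Fin (d + 1)) × ℝ)) :=
    {p : WithLp 2 (EuclideanSpace ℝ (Fin (d + 1)) × ℝ) |
      ∃ x : sphere (0 : EuclideanSpace ℝ (Fin (d + 1))) 1,
        p = (WithLp.equiv 2 (EuclideanSpace ℝ (Fin (d + 1)) × ℝ)).symm
          ((x : EuclideanSpace ℝ (Fin (d + 1))), f x)} with hEset
  suffices key : ∀ s : Finset (WithLp 2 (EuclideanSpace ℝ (Fin (d + 1)) × ℝ)),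
      (Eset ⊆ ⋃ y ∈ s, Metric.closedBall y θ) →
      ENNReal.ofReal (∫ x, |Tshift θ f x - f x|
          ∂(Measure.toSphere (volume : Measure (EuclideanSpace ℝ (Fin (d + 1)))))) ≤
        ENNReal.ofReal (C * θ ^ (d + 1)) * (s.card : ℝ≥0∞) by
    rcases eq_or_ne (coverNum Eset θ) ⊤ with hN | hN
    · rw [hN, ENat.toENNReal_top, ENNReal.mul_top hCθ0]
      exact le_top
    · have hlt : (⨅ (s : Finset (WithLp 2 (EuclideanSpace ℝ (Fin (d + 1)) × ℝ)))
          (_ : Eset ⊆ ⋃ y ∈ s, Metric.closedBall y θ), (s.card : ℕ∞)) <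
            coverNum Eset θ + 1 := (ENat.lt_add_one_iff hN).2 le_rfl
      rw [iInf_lt_iff] at hlt
      obtain ⟨s, hlt⟩ := hlt
      rw [iInf_lt_iff] at hlt
      obtain ⟨hs, hcard⟩ := hlt
      have hcard' : (s.card : ℕ∞) ≤ coverNum Eset θ := by
        rw [← ENat.lt_add_one_iff hN]
        exact hcard
      refine (key s hs).trans (mul_le_mul_right ?_ _)
      rw [show ((s.card : ℕ) : ℝ≥0∞) = ((s.card : ℕ∞) : ℝ≥0∞) by
        rw [ENat.toENNReal_coe]]
      exact ENat.toENNReal_le.2 hcard'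
  intro s hs
  rw [hEset] at hs
  set σd : Measure (sphere (0 : EuclideanSpace ℝ (Fin (d + 1))) 1) :=
    Measure.toSphere (volume : Measure (EuclideanSpace ℝ (Fin (d + 1)))) with hσd
  by_cases hInt : Integrable (fun x => |Tshift θ f x - f x|) σd
  swap
  · rw [MeasureTheory.integral_undef hInt]
    simp
  -- the comparison function
  set Q : (sphere (0 : EuclideanSpace ℝ (Fin (d + 1))) 1) →
      WithLp 2 (EuclideanSpace ℝ (Fin (d + 1)) × ℝ) → Prop := fun x c =>
    dist (x : EuclideanSpace ℝ (Fin (d + 1)))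
      ((WithLp.equiv 2 (EuclideanSpace ℝ (Fin (d + 1)) × ℝ) c).1) ≤ 2 * θ with hQ
  set g : (sphere (0 : EuclideanSpace ℝ (Fin (d + 1))) 1) → ℝ := fun x =>
    ∑ c ∈ s, if Q x c then 2 * θ else 0 with hg
  have hgsum : ∀ x, g x = ((s.filter (Q x)).card : ℝ) * (2 * θ) := by
    intro x
    rw [hg]
    simp only
    rw [← Finset.sum_filter, Finset.sum_const, nsmul_eq_mul]
  have hpt : ∀ x, |Tshift θ f x - f x| ≤ g x := by
    intro x
    rw [hgsum x, mul_comm]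
    exact pointwise_bound hd f hf hθ s hs x
  have hCmeas : ∀ c, MeasurableSet {x : sphere (0 : EuclideanSpace ℝ (Fin (d + 1))) 1 |
      Q x c} := by
    intro c
    refine IsClosed.measurableSet ?_
    exact isClosed_le (continuous_subtype_val.dist continuous_const) continuous_const
  have hind : ∀ c, (fun x : sphere (0 : EuclideanSpace ℝ (Fin (d + 1))) 1 =>
      if Q x c then 2 * θ else 0) =
      Set.indicator {x : sphere (0 : EuclideanSpace ℝ (Fin (d + 1))) 1 | Q x c}
        (fun _ => 2 * θ) := by
    intro c
    ext x
    rw [Set.indicator_apply]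
    rfl
  have hgInt : Integrable g σd := by
    rw [hg]
    refine integrable_finset_sum _ fun c _ => ?_
    rw [hind c]
    exact (integrable_const _).indicator (hCmeas c)
  have hIg : ∫ x, g x ∂σd = ∑ c ∈ s, (σd {x | Q x c}).toReal * (2 * θ) := by
    rw [hg]
    rw [integral_finset_sum _ fun c _ => by
      rw [hind c]; exact (integrable_const _).indicator (hCmeas c)]
    refine Finset.sum_congr rfl fun c _ => ?_
    rw [hind c, integral_indicator_const _ (hCmeas c), smul_eq_mul]; rfl
  -- cap bound for each ball
  have hcap : ∀ c, σd {x | Q x c} ≤ ENNReal.ofReal (capC d * (2 * θ) ^ d) := by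
    intro c
    rw [hσd]
    refine cap_bound _ (by positivity) ?_
    have := Real.pi_pos
    linarith
  calc ENNReal.ofReal (∫ x, |Tshift θ f x - f x| ∂σd)
      ≤ ENNReal.ofReal (∫ x, g x ∂σd) := by
        refine ENNReal.ofReal_le_ofReal ?_
        exact integral_mono hInt hgInt hpt
  _ = ENNReal.ofReal (∑ c ∈ s, (σd {x | Q x c}).toReal * (2 * θ)) := by rw [hIg]
  _ = ∑ c ∈ s, ENNReal.ofReal ((σd {x | Q x c}).toReal * (2 * θ)) :=
        ENNReal.ofReal_sum_of_nonneg fun c _ =>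
          mul_nonneg ENNReal.toReal_nonneg (by positivity)
  _ = ∑ c ∈ s, σd {x | Q x c} * ENNReal.ofReal (2 * θ) := by
        refine Finset.sum_congr rfl fun c _ => ?_
        rw [ENNReal.ofReal_mul ENNReal.toReal_nonneg, ENNReal.ofReal_toReal (measure_ne_top _ _)]
  _ ≤ ∑ _c ∈ s, ENNReal.ofReal (capC d * (2 * θ) ^ d) * ENNReal.ofReal (2 * θ) := by
        refine Finset.sum_le_sum fun c _ => mul_le_mul_left (hcap c) _
  _ = (s.card : ℝ≥0∞) * (ENNReal.ofReal (capC d * (2 * θ) ^ d) * ENNReal.ofReal (2 * θ)) := by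
        rw [Finset.sum_const, nsmul_eq_mul]
  _ ≤ ENNReal.ofReal (C * θ ^ (d + 1)) * (s.card : ℝ≥0∞) := by
        rw [mul_comm]
        refine mul_le_mul_left ?_ _
        rw [← ENNReal.ofReal_mul (by have := capC_nonneg d; positivity)]
        refine ENNReal.ofReal_le_ofReal ?_
        have hcap0 := capC_nonneg d
        calc capC d * (2 * θ) ^ d * (2 * θ) = 2 ^ (d + 1) * capC d * θ ^ (d + 1) := by ring
        _ ≤ C * θ ^ (d + 1) := by
              rw [hC]
              have : (0:ℝ) ≤ θ ^ (d + 1) := by positivity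
              nlinarith
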